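/- Let E1, E2 be origin-centered ellipsoids with positive definite shape matrices Q1, Q2. Then the origin-centered ellipsoid with shape matrix Q1 ⊞ Q2 = (√(Tr Q1)+√(Tr Q2))(Q1/√(Tr Q1)+Q2/√(Tr Q2)) contains the Minkowski sum E1 + E2, i.e., for any x with x^T Q1^{-1} x ≤ 1 and y with y^T Q2^{-1} y ≤ 1, one has (x+y)^T (Q1 ⊞ Q2)^{-1} (x+y) ≤ 1. -/

import Mathlib

open Matrix Real

/-- Entries on the diagonal of a positive definite real matrix are positive. -/
lemma posdef_diag_pos {n : ℕ} {A : Matrix (Fin n) (Fin n) ℝ} (hA : A.PosDef)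
    (i : Fin n) : 0 < A i i := by
  have h := hA.dotProduct_mulVec_pos (x := Pi.single i 1) (by
    intro h
    have := congrFun h i
    simp at this)
  simpa [dotProduct, mulVec, Pi.single_apply, Finset.sum_ite_eq] using h

lemma posdef_trace_pos {n : ℕ} {A : Matrix (Fin n) (Fin n) ℝ} (hA : A.PosDef)
    (hn : 0 < n) : 0 < A.trace := by
  have : Nonempty (Fin n) := ⟨⟨0, hn⟩⟩
  exact Finset.sum_pos (fun i _ => posdef_diag_pos hA i) Finset.univ_nonempty

lemma posdef_smul {n : ℕ} {A : Matrix (Fin n) (Fin n) ℝ} (hA : A.PosDef)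
    {c : ℝ} (hc : 0 < c) : (c • A).PosDef := by
  refine Matrix.PosDef.of_dotProduct_mulVec_pos ?_ (fun v hv => ?_)
  · have h := hA.1
    simpa [Matrix.IsHermitian, Matrix.transpose_smul] using congrArg (c • ·) h
  · have h := hA.dotProduct_mulVec_pos hv
    have : (c • A) *ᵥ v = c • (A *ᵥ v) := by
      rw [Matrix.smul_mulVec]
    rw [this]
    simp only [dotProduct_smul, smul_eq_mul]
    positivity

/-- Completed-square inequality: `2 z⬝v - t⁻¹ z⬝Az ≤ t * v⬝A⁻¹v` for PosDef A, t > 0. -/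
lemma key_ineq {n : ℕ} {A : Matrix (Fin n) (Fin n) ℝ} (hA : A.PosDef)
    (z v : Fin n → ℝ) {t : ℝ} (ht : 0 < t) :
    2 * (z ⬝ᵥ v) - t⁻¹ * (z ⬝ᵥ (A *ᵥ z)) ≤ t * (v ⬝ᵥ (A⁻¹ *ᵥ v)) := by
  have hinv : A * A⁻¹ = 1 := Matrix.mul_nonsing_inv A hA.det_pos.ne'.isUnit
  set w : Fin n → ℝ := t⁻¹ • z - A⁻¹ *ᵥ v with hw
  have hpsd := hA.posSemidef.dotProduct_mulVec_nonneg w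
  have hsymm : ∀ a b : Fin n → ℝ, a ⬝ᵥ (A *ᵥ b) = b ⬝ᵥ (A *ᵥ a) := by
    intro a b
    have hAT : Aᵀ = A := by
      ext i j; have := congrFun (congrFun hA.1 i) j; simpa using this
    rw [Matrix.dotProduct_mulVec, ← Matrix.mulVec_transpose, hAT, dotProduct_comm]
  have hAinv : A *ᵥ (A⁻¹ *ᵥ v) = v := by
    rw [Matrix.mulVec_mulVec, hinv, Matrix.one_mulVec]
  have hexp : star w ⬝ᵥ (A *ᵥ w) =
      t⁻¹ * t⁻¹ * (z ⬝ᵥ (A *ᵥ z)) - 2 * t⁻¹ * (z ⬝ᵥ v) + v ⬝ᵥ (A⁻¹ *ᵥ v) := by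
    have h1 : z ⬝ᵥ (A *ᵥ (A⁻¹ *ᵥ v)) = z ⬝ᵥ v := by rw [hAinv]
    have h2 : (A⁻¹ *ᵥ v) ⬝ᵥ (A *ᵥ z) = z ⬝ᵥ v := by rw [hsymm, hAinv]
    have h3 : (A⁻¹ *ᵥ v) ⬝ᵥ (A *ᵥ (A⁻¹ *ᵥ v)) = v ⬝ᵥ (A⁻¹ *ᵥ v) := by
      rw [hAinv, dotProduct_comm]
    simp only [hw, star_trivial, Matrix.mulVec_sub, Matrix.mulVec_smul,
      sub_dotProduct, dotProduct_sub, smul_dotProduct, dotProduct_smul, smul_eq_mul,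
      h1, h2, h3]
    ring
  rw [hexp] at hpsd
  have := mul_le_mul_of_nonneg_left hpsd ht.le
  have hexp2 : t * (t⁻¹ * t⁻¹ * (z ⬝ᵥ (A *ᵥ z)) - 2 * t⁻¹ * (z ⬝ᵥ v) + v ⬝ᵥ (A⁻¹ *ᵥ v))
      = t⁻¹ * (z ⬝ᵥ (A *ᵥ z)) - 2 * (z ⬝ᵥ v) + t * (v ⬝ᵥ (A⁻¹ *ᵥ v)) := by
    field_simp
  rw [hexp2, mul_zero] at this
  linarith

theorem boxplus_contains_minkowski_sum {n : ℕ}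
    (Q₁ Q₂ : Matrix (Fin n) (Fin n) ℝ) (hQ₁ : Q₁.PosDef) (hQ₂ : Q₂.PosDef)
    (x y : Fin n → ℝ)
    (hx : x ⬝ᵥ (Q₁⁻¹ *ᵥ x) ≤ 1) (hy : y ⬝ᵥ (Q₂⁻¹ *ᵥ y) ≤ 1) :
    (x + y) ⬝ᵥ
        (((Real.sqrt Q₁.trace + Real.sqrt Q₂.trace) •
            ((Real.sqrt Q₁.trace)⁻¹ • Q₁ + (Real.sqrt Q₂.trace)⁻¹ • Q₂))⁻¹
          *ᵥ (x + y)) ≤ 1 := by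
  rcases Nat.eq_zero_or_pos n with hn | hn
  · subst hn
    simp [dotProduct]
  · set t₁ := Real.sqrt Q₁.trace with ht₁def
    set t₂ := Real.sqrt Q₂.trace with ht₂def
    have ht₁ : 0 < t₁ := Real.sqrt_pos.mpr (posdef_trace_pos hQ₁ hn)
    have ht₂ : 0 < t₂ := Real.sqrt_pos.mpr (posdef_trace_pos hQ₂ hn)
    have hs : 0 < t₁ + t₂ := by positivity
    set Q : Matrix (Fin n) (Fin n) ℝ := (t₁ + t₂) • (t₁⁻¹ • Q₁ + t₂⁻¹ • Q₂) with hQdef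
    have hQ : Q.PosDef :=
      posdef_smul ((posdef_smul hQ₁ (inv_pos.mpr ht₁)).add (posdef_smul hQ₂ (inv_pos.mpr ht₂))) hs
    set z : Fin n → ℝ := Q⁻¹ *ᵥ (x + y) with hz
    have hQz : Q *ᵥ z = x + y := by
      rw [hz, Matrix.mulVec_mulVec, Matrix.mul_nonsing_inv Q hQ.det_pos.ne'.isUnit,
        Matrix.one_mulVec]
    have hgoal : (x + y) ⬝ᵥ (Q⁻¹ *ᵥ (x + y)) = z ⬝ᵥ x + z ⬝ᵥ y := by
      rw [← hz, dotProduct_comm, dotProduct_add]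
    have hS : z ⬝ᵥ (Q *ᵥ z) =
        (t₁ + t₂) * (t₁⁻¹ * (z ⬝ᵥ (Q₁ *ᵥ z)) + t₂⁻¹ * (z ⬝ᵥ (Q₂ *ᵥ z))) := by
      simp only [hQdef, Matrix.smul_mulVec, Matrix.add_mulVec,
        dotProduct_smul, dotProduct_add, smul_eq_mul]
    have hc : z ⬝ᵥ x + z ⬝ᵥ y =
        (t₁ + t₂) * (t₁⁻¹ * (z ⬝ᵥ (Q₁ *ᵥ z)) + t₂⁻¹ * (z ⬝ᵥ (Q₂ *ᵥ z))) := by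
      rw [← hS, hQz, dotProduct_add]
    have hl1 : (0:ℝ) < t₁ / (t₁ + t₂) := by positivity
    have hl2 : (0:ℝ) < t₂ / (t₁ + t₂) := by positivity
    have h1 := key_ineq hQ₁ z x hl1
    have h2 := key_ineq hQ₂ z y hl2
    have hi1 : (t₁ / (t₁ + t₂))⁻¹ = (t₁ + t₂) * t₁⁻¹ := by
      rw [inv_div, div_eq_mul_inv]
    have hi2 : (t₂ / (t₁ + t₂))⁻¹ = (t₁ + t₂) * t₂⁻¹ := by
      rw [inv_div, div_eq_mul_inv]
    rw [hi1] at h1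
    rw [hi2] at h2
    have hb1 : t₁ / (t₁ + t₂) * (x ⬝ᵥ (Q₁⁻¹ *ᵥ x)) ≤ t₁ / (t₁ + t₂) := by
      nlinarith [mul_le_mul_of_nonneg_left hx hl1.le]
    have hb2 : t₂ / (t₁ + t₂) * (y ⬝ᵥ (Q₂⁻¹ *ᵥ y)) ≤ t₂ / (t₁ + t₂) := by
      nlinarith [mul_le_mul_of_nonneg_left hy hl2.le]
    have hsum : t₁ / (t₁ + t₂) + t₂ / (t₁ + t₂) = 1 := by field_simp
    -- goal: (x+y) ⬝ᵥ (Q⁻¹ *ᵥ (x+y)) ≤ 1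
    show (x + y) ⬝ᵥ (Q⁻¹ *ᵥ (x + y)) ≤ 1
    rw [hgoal]
    nlinarith [h1, h2, hb1, hb2, hc, hsum]
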